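/- Let Γ, Σ, Δ be finite alphabets, let f : Γ* → Σ* and g : Γ* → Δ* be monoid homomorphisms of free monoids, let R ⊆ Γ* be a regular language, and let L ⊆ Σ* be a regular language. Then the language {g(r) | r ∈ R and f(r) ∈ L} ⊆ Δ* is regular. -/

import Mathlib

open Set

namespace RatTransAux

variable {α : Type*} {σ : Type*} (M : εNFA α σ)

/-- A set of states closed under ε-transitions. -/
def IsEpsClosed (T : Set σ) : Prop := ∀ s ∈ T, ∀ t ∈ M.step s none, t ∈ T

lemma εClosure_minimal {S T : Set σ} (h : S ⊆ T) (hT : IsEpsClosed M T) :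
    M.εClosure S ⊆ T := by
  intro s hs
  induction hs with
  | base s hs => exact h hs
  | step s t ht _ ih => exact hT _ ih _ ht

lemma isEpsClosed_εClosure (S : Set σ) : IsEpsClosed M (M.εClosure S) :=
  fun s hs t ht => εNFA.εClosure.step s t ht hs

lemma isEpsClosed_stepSet (S : Set σ) (a : α) : IsEpsClosed M (M.stepSet S a) := by
  intro s hs t ht
  rw [εNFA.mem_stepSet_iff] at hs ⊢
  obtain ⟨u, hu, hsu⟩ := hs
  exact ⟨u, hu, εNFA.εClosure.step _ _ ht hsu⟩

lemma isEpsClosed_evalFrom (S : Set σ) (w : List α) : IsEpsClosed M (M.evalFrom S w) := by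
  induction w using List.reverseRecOn with
  | nil => exact isEpsClosed_εClosure M S
  | append_singleton w a _ =>
    rw [εNFA.evalFrom_append_singleton]
    exact isEpsClosed_stepSet M _ a

end RatTransAux

open RatTransAux

/-- Corollary 5.5 for free monoids: the image of a rational language under a rational
relation (transduction) is rational.  The rational relation `Σ* → Δ*` is presented as
`{(f(r), g(r)) | r ∈ R}` for homomorphisms `f : Γ* → Σ*`, `g : Γ* → Δ*` and a regular
language `R ⊆ Γ*`. -/
theorem image_rational_transduction_regular {Γ S Δ : Type}
    [Fintype Γ] [Fintype S] [Fintype Δ]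
    (f : FreeMonoid Γ →* FreeMonoid S) (g : FreeMonoid Γ →* FreeMonoid Δ)
    (R : Language Γ) (hR : R.IsRegular) (L : Language S) (hL : L.IsRegular) :
    Language.IsRegular
      {w : List Δ | ∃ r ∈ R, FreeMonoid.toList (f (FreeMonoid.ofList r)) ∈ L ∧
        FreeMonoid.toList (g (FreeMonoid.ofList r)) = w} := by
  classical
  obtain ⟨σ₁, _, M₁, hM₁⟩ := hR
  obtain ⟨σ₂, _, M₂, hM₂⟩ := hL
  -- abbreviations for letter images
  set fl : Γ → List S := fun a => FreeMonoid.toList (f (FreeMonoid.of a)) with hfl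
  set gl : Γ → List Δ := fun a => FreeMonoid.toList (g (FreeMonoid.of a)) with hgl
  set flist : List Γ → List S := fun r => FreeMonoid.toList (f (FreeMonoid.ofList r)) with hflist
  set glist : List Γ → List Δ := fun r => FreeMonoid.toList (g (FreeMonoid.ofList r)) with hglist
  have flist_snoc : ∀ (r : List Γ) (a : Γ), flist (r ++ [a]) = flist r ++ fl a := by
    intro r a
    simp only [hflist, hfl, FreeMonoid.ofList_append, FreeMonoid.ofList_singleton, map_mul,
      FreeMonoid.toList_mul]
  have glist_snoc : ∀ (r : List Γ) (a : Γ), glist (r ++ [a]) = glist r ++ gl a := by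
    intro r a
    simp only [hglist, hgl, FreeMonoid.ofList_append, FreeMonoid.ofList_singleton, map_mul,
      FreeMonoid.toList_mul]
  have flist_nil : flist [] = [] := by simp [hflist]
  have glist_nil : glist [] = [] := by simp [hglist]
  -- the product DFA recognizing K = R ∩ f⁻¹ L
  set N : DFA Γ (σ₁ × σ₂) :=
    ⟨fun p a => (M₁.step p.1 a, M₂.evalFrom p.2 (fl a)), (M₁.start, M₂.start),
      {p | p.1 ∈ M₁.accept ∧ p.2 ∈ M₂.accept}⟩ with hN
  have N_eval : ∀ (r : List Γ) (p : σ₁ × σ₂),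
      N.evalFrom p r = (M₁.evalFrom p.1 r, M₂.evalFrom p.2 (flist r)) := by
    intro r
    induction r using List.reverseRecOn with
    | nil => intro p; simp [flist_nil]
    | append_singleton r a ih =>
      intro p
      rw [DFA.evalFrom_append_singleton, DFA.evalFrom_append_singleton, ih, flist_snoc,
        DFA.evalFrom_of_append]
  -- the suffix state space
  set suf : Set (List Δ) := {u | u = [] ∨ ∃ a : Γ, u <:+ gl a} with hsuf
  have suf_nil : [] ∈ suf := Or.inl rfl
  have suf_tail : ∀ u ∈ suf, ∀ (d : Δ) (u' : List Δ), u = d :: u' → u' ∈ suf := by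
    rintro u hu d u' rfl
    rcases hu with h | ⟨a, ha⟩
    · exact absurd h (by simp)
    · exact Or.inr ⟨a, (List.suffix_cons d u').trans ha⟩
  have suf_fin : suf.Finite := by
    have : suf ⊆ insert [] (⋃ a : Γ, {u | u ∈ (gl a).tails}) := by
      rintro u (h | ⟨a, ha⟩)
      · exact Or.inl h
      · exact Or.inr (mem_iUnion.mpr ⟨a, by simpa [List.mem_tails] using ha⟩)
    exact Set.Finite.subset
      ((Set.finite_iUnion fun a : Γ => List.finite_toSet (gl a).tails).insert []) this
  haveI : Finite ↥suf := suf_fin.to_subtype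
  -- the ε-NFA recognizing the image under g
  set E : εNFA Δ ((σ₁ × σ₂) × ↥suf) :=
    ⟨fun s o => match o with
      | some d => {t | t.1 = s.1 ∧ (s.2 : List Δ) = d :: (t.2 : List Δ)}
      | none => {t | (s.2 : List Δ) = [] ∧ ∃ a : Γ,
          t.1 = N.step s.1 a ∧ (t.2 : List Δ) = gl a},
      {s | s.1 = N.start ∧ (s.2 : List Δ) = []},
      {s | s.1 ∈ N.accept ∧ (s.2 : List Δ) = []}⟩ with hE
  -- invariant
  set P : List Δ → ((σ₁ × σ₂) × ↥suf) → Prop :=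
    fun w s => ∃ r : List Γ, N.evalFrom N.start r = s.1 ∧ glist r = w ++ (s.2 : List Δ)
    with hP
  have closedP : ∀ w, IsEpsClosed E {s | P w s} := by
    intro w s hs t ht
    obtain ⟨hnil, a, ht1, ht2⟩ := ht
    obtain ⟨r, hr1, hr2⟩ := hs
    refine ⟨r ++ [a], ?_, ?_⟩
    · rw [DFA.evalFrom_append_singleton, hr1, ht1]
    · rw [glist_snoc, hr2, hnil, ht2]
      simp
  have sound : ∀ w, E.eval w ⊆ {s | P w s} := by
    intro w
    induction w using List.reverseRecOn with
    | nil =>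
      show E.evalFrom E.start [] ⊆ _
      rw [εNFA.evalFrom_nil]
      refine εClosure_minimal E ?_ (closedP [])
      rintro s ⟨h1, h2⟩
      exact ⟨[], by rw [DFA.evalFrom_nil, h1], by rw [glist_nil, h2]; rfl⟩
    | append_singleton w d ih =>
      rw [εNFA.eval_append_singleton]
      intro s hs
      rw [εNFA.mem_stepSet_iff] at hs
      obtain ⟨t, htw, hst⟩ := hs
      refine εClosure_minimal E ?_ (closedP (w ++ [d])) hst
      rintro s₀ ⟨h1, h2⟩
      obtain ⟨r, hr1, hr2⟩ := ih htw
      refine ⟨r, by rw [hr1, h1], ?_⟩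
      rw [hr2, h2]
      simp
  -- consuming pending output letters
  have consume : ∀ (u : List Δ) (w : List Δ) (s : (σ₁ × σ₂) × ↥suf), s ∈ E.eval w →
      ∀ t : (σ₁ × σ₂) × ↥suf, t.1 = s.1 → (s.2 : List Δ) = u ++ (t.2 : List Δ) →
      t ∈ E.eval (w ++ u) := by
    intro u
    induction u with
    | nil =>
      intro w s hs t h1 h2
      have : t = s :=
        Prod.ext h1 (Subtype.ext (by simpa using h2.symm))
      rw [List.append_nil, this]
      exact hs
    | cons d u' ih =>
      intro w s hs t h1 h2
      have hmem : (u' ++ (t.2 : List Δ)) ∈ suf :=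
        suf_tail _ s.2.2 d _ h2
      set m : (σ₁ × σ₂) × ↥suf := (s.1, ⟨u' ++ (t.2 : List Δ), hmem⟩) with hm
      have hm_step : m ∈ E.step s (some d) := ⟨rfl, h2⟩
      have hm_eval : m ∈ E.eval (w ++ [d]) := by
        rw [εNFA.eval_append_singleton, εNFA.mem_stepSet_iff]
        exact ⟨s, hs, εNFA.εClosure.base _ hm_step⟩
      have := ih (w ++ [d]) m hm_eval t h1 rfl
      simpa using this
  -- completeness
  have complete : ∀ r : List Γ,
      ((N.evalFrom N.start r, ⟨[], suf_nil⟩) : (σ₁ × σ₂) × ↥suf) ∈ E.eval (glist r) := by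
    intro r
    induction r using List.reverseRecOn with
    | nil =>
      rw [glist_nil]
      show _ ∈ E.evalFrom E.start []
      rw [εNFA.evalFrom_nil]
      exact εNFA.εClosure.base _ ⟨by rw [DFA.evalFrom_nil], rfl⟩
    | append_singleton r a ih =>
      set q := N.evalFrom N.start r with hq
      have hglsuf : gl a ∈ suf := Or.inr ⟨a, List.suffix_refl _⟩
      set m : (σ₁ × σ₂) × ↥suf := (N.step q a, ⟨gl a, hglsuf⟩) with hm
      have hstep : m ∈ E.step (q, ⟨[], suf_nil⟩) none := ⟨rfl, a, rfl, rfl⟩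
      have hm_eval : m ∈ E.eval (glist r) :=
        isEpsClosed_evalFrom E E.start (glist r) _ ih _ hstep
      have := consume (gl a) (glist r) m hm_eval
        (N.evalFrom N.start (r ++ [a]), ⟨[], suf_nil⟩)
        (by rw [DFA.evalFrom_append_singleton]) (by simp [hm])
      rwa [← glist_snoc] at this
  -- assemble the DFA
  refine ⟨Set ((σ₁ × σ₂) × ↥suf), Fintype.ofFinite _, E.toNFA.toDFA, ?_⟩
  rw [NFA.toDFA_correct, εNFA.toNFA_correct]
  ext w
  constructor
  · rintro ⟨s, ⟨hacc, hnil⟩, hs⟩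
    obtain ⟨r, hr1, hr2⟩ := sound w hs
    rw [N_eval] at hr1
    have e1 : M₁.evalFrom M₁.start r = s.1.1 := congrArg Prod.fst hr1
    have e2 : M₂.evalFrom M₂.start (flist r) = s.1.2 := congrArg Prod.snd hr1
    refine ⟨r, ?_, ?_, ?_⟩
    · rw [← hM₁]
      show M₁.evalFrom M₁.start r ∈ M₁.accept
      rw [e1]
      exact hacc.1
    · rw [← hM₂]
      show M₂.evalFrom M₂.start (flist r) ∈ M₂.accept
      rw [e2]
      exact hacc.2
    · rw [show FreeMonoid.toList (g (FreeMonoid.ofList r)) = glist r from rfl, hr2, hnil]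
      simp
  · rintro ⟨r, hrR, hrL, hrw⟩
    refine ⟨(N.evalFrom N.start r, ⟨[], suf_nil⟩), ⟨?_, rfl⟩, ?_⟩
    · rw [N_eval]
      constructor
      · rw [← hM₁] at hrR; exact hrR
      · rw [← hM₂] at hrL; exact hrL
    · rw [← hrw]
      exact complete r
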